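/- Let Σ be a linearly ordered alphabet with minimum element #, and let T_1 and T_2 be strings of the same length n, each containing exactly one occurrence of # and each ending with #. If BWT(T_1) = BWT(T_2), then T_1 = T_2. In other words, the Burrows-Wheeler transform is injective on terminated strings. -/

import Mathlib

/-- The list of all `n` rotations of a string `T` of length `n`:
the `i`-th rotation is `T[i..n−1]T[0..i−1]`. -/
def rotations {α : Type*} (T : List α) : List (List α) :=
  (List.range T.length).map fun i => T.drop i ++ T.take i

/-- The matrix `M` of `T`: the multiset of all rotations of `T`,
sorted lexicographically. -/
def sortedRotations {α : Type*} [LinearOrder α] (T : List α) : List (List α) :=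
  Multiset.sort (rotations T : Multiset (List α)) (· ≤ ·)

/-- The Burrows-Wheeler transform of `T`: the last characters of the
lexicographically sorted rotations of `T`. -/
def bwt {α : Type*} [LinearOrder α] (T : List α) : List α :=
  (sortedRotations T).filterMap List.getLast?

section Aux

set_option linter.unusedSectionVars false

variable {α : Type*} [LinearOrder α]

/-- Lex order on truncations implies lex order on the lists. -/
lemma lex_of_lex_take {r : α → α → Prop} :
    ∀ (k : ℕ) (l₁ l₂ : List α), List.Lex r (l₁.take k) (l₂.take k) → List.Lex r l₁ l₂ := by
  intro k
  induction k with
  | zero => intro l₁ l₂ h; simp at h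
  | succ k ih =>
    intro l₁ l₂ h
    match l₁, l₂ with
    | [], [] => simp at h
    | [], b :: t₂ => exact List.Lex.nil
    | a :: t₁, [] => simp at h
    | a :: t₁, b :: t₂ =>
      simp only [List.take_succ_cons] at h
      cases h with
      | cons h => exact List.Lex.cons (ih _ _ h)
      | rel h => exact List.Lex.rel h

lemma take_le_take {k : ℕ} {a b : List α} (h : a ≤ b) : a.take k ≤ b.take k := by
  by_contra hc
  rw [not_le] at hc
  have hba : b < a := lex_of_lex_take k b a hc
  exact absurd h (not_le.mpr hba)

lemma sorted_map_take {k : ℕ} {S : List (List α)} (h : S.Pairwise (· ≤ ·)) :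
    (S.map (List.take k)).Pairwise (· ≤ ·) :=
  List.Pairwise.map _ (fun _ _ hab => take_le_take hab) h

/-- Moving the last character of a nonempty list to the front is a rotation. -/
lemma rot1_eq (d : α) {R : List α} (h : R ≠ []) :
    R.getLastD d :: R.dropLast = R.rotate (R.length - 1) := by
  rcases List.eq_nil_or_concat R with rfl | ⟨L, b, rfl⟩
  · exact absurd rfl h
  · rw [List.concat_eq_append, List.getLastD_concat, List.dropLast_concat]
    have hlen : (L ++ [b]).length = L.length + 1 := by simp
    rw [hlen]
    simp only [Nat.add_sub_cancel]
    rw [List.rotate_eq_drop_append_take (by simp), List.drop_left, List.take_left]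
    rfl

lemma rotations_eq (T : List α) :
    rotations T = (List.range T.length).map (fun i => T.rotate i) := by
  unfold rotations
  refine List.map_congr_left fun i hi => ?_
  rw [List.mem_range] at hi
  rw [List.rotate_eq_drop_append_take hi.le]

lemma length_rotations (T : List α) : (rotations T).length = T.length := by
  unfold rotations; simp

lemma length_of_mem_rotations {T R : List α} (h : R ∈ rotations T) :
    R.length = T.length := by
  rw [rotations_eq] at h
  obtain ⟨i, _, rfl⟩ := List.mem_map.mp h
  exact List.length_rotate T i

/-- The multiset of rotations is closed under the "last to front" operation. -/
lemma map_rot1_perm (d : α) (T : List α) :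
    ((rotations T).map (fun R => R.getLastD d :: R.dropLast)).Perm (rotations T) := by
  have key : (rotations T).map (fun R => R.getLastD d :: R.dropLast)
      = (rotations T).rotate (T.length - 1) := by
    apply List.ext_getElem
    · simp [List.length_rotate]
    · intro j h₁ h₂
      rw [List.length_map, length_rotations] at h₁
      have hTne : T ≠ [] := by
        intro hT; rw [hT] at h₁; simp at h₁
      rw [List.getElem_map, List.getElem_rotate]
      simp only [rotations_eq, List.getElem_map, List.getElem_range, length_rotations,
        List.length_map, List.length_range]
      have hRne : T.rotate j ≠ [] := by
        intro hr
        have hlr := List.length_rotate T j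
        rw [hr] at hlr; simp at hlr
        exact hTne (List.eq_nil_of_length_eq_zero hlr.symm)
      rw [rot1_eq d hRne, List.length_rotate, List.rotate_rotate]
      rw [← List.rotate_mod T (j + (T.length - 1))]
  rw [key]
  exact List.rotate_perm _ _

lemma sortedRotations_perm (T : List α) :
    (sortedRotations T).Perm (rotations T) := by
  rw [← Multiset.coe_eq_coe]
  exact Multiset.sort_eq _ _

lemma zipWith_bwt (d : α) (f : List α → List α) :
    ∀ (S : List (List α)), (∀ R ∈ S, R ≠ []) →
      List.zipWith List.cons (S.filterMap List.getLast?) (S.map f)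
        = S.map (fun R => R.getLastD d :: f R) := by
  intro S
  induction S with
  | nil => intro _; rfl
  | cons R S ih =>
    intro h
    have hR : R ≠ [] := h R List.mem_cons_self
    have hsome : R.getLast? = some (R.getLastD d) := by
      obtain ⟨x, hx⟩ := Option.isSome_iff_exists.mp (List.getLast?_isSome.mpr hR)
      rw [List.getLastD_eq_getLast?, hx]
      rfl
    simp only [List.filterMap_cons, hsome, List.map_cons, List.zipWith_cons_cons]
    rw [ih (fun R' hR' => h R' (List.mem_cons_of_mem _ hR'))]

/-- Key step: the sorted `k`-prefixes of the rotations. -/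
lemma sorted_take_eq (T : List α) (k : ℕ) :
    (sortedRotations T).map (List.take k)
      = Multiset.sort (((rotations T).map (List.take k) : List (List α)) :
          Multiset (List α)) (· ≤ ·) := by
  refine (fun hp h1 h2 => List.Perm.eq_of_pairwise' (r := (· ≤ · : List α → List α → Prop)) h1 h2 hp) ?_ ?_ ?_
  · rw [← Multiset.coe_eq_coe, Multiset.sort_eq, Multiset.coe_eq_coe]
    exact (sortedRotations_perm T).map _
  · exact sorted_map_take (Multiset.pairwise_sort _ _)
  · exact Multiset.pairwise_sort _ _

/-- The inverse-BWT column reconstruction, defined from the length and the BWT alone. -/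
def recon (n : ℕ) (L : List α) : ℕ → List (List α)
  | 0 => List.replicate n []
  | k + 1 => Multiset.sort
      ((List.zipWith List.cons L (recon n L k) : List (List α)) : Multiset (List α)) (· ≤ ·)

lemma recon_spec (T : List α) (d : α) :
    ∀ k, k ≤ T.length →
      (sortedRotations T).map (List.take k) = recon T.length (bwt T) k := by
  have hlenS : (sortedRotations T).length = T.length := by
    rw [(sortedRotations_perm T).length_eq, length_rotations]
  have hmemlen : ∀ R ∈ sortedRotations T, R.length = T.length := fun R hR =>
    length_of_mem_rotations ((sortedRotations_perm T).mem_iff.mp hR)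
  intro k
  induction k with
  | zero =>
    intro _
    rw [recon]
    rw [List.eq_replicate_iff]
    constructor
    · rw [List.length_map, hlenS]
    · intro b hb
      obtain ⟨R, _, rfl⟩ := List.mem_map.mp hb
      simp
  | succ k ih =>
    intro hk
    have hk' : k ≤ T.length := Nat.le_of_succ_le hk
    have hTne : T ≠ [] := by
      intro h; rw [h] at hk; simp at hk
    rw [recon, ← ih hk']
    have hne : ∀ R ∈ sortedRotations T, R ≠ [] := by
      intro R hR h
      have := hmemlen R hR
      rw [h] at this
      exact hTne (List.eq_nil_of_length_eq_zero this.symm)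
    rw [show bwt T = (sortedRotations T).filterMap List.getLast? from rfl,
      zipWith_bwt d (List.take k) _ hne]
    have step : (sortedRotations T).map (fun R => R.getLastD d :: R.take k)
        = ((sortedRotations T).map (fun R => R.getLastD d :: R.dropLast)).map
            (List.take (k + 1)) := by
      rw [List.map_map]
      refine List.map_congr_left fun R hR => ?_
      simp only [Function.comp_apply, List.take_succ_cons]
      congr 1
      rw [List.dropLast_eq_take, List.take_take]
      congr 1
      have := hmemlen R hR
      omega
    rw [step]
    have hperm : (((sortedRotations T).map (fun R => R.getLastD d :: R.dropLast)).map
        (List.take (k + 1))).Perm ((rotations T).map (List.take (k + 1))) := by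
      refine List.Perm.map _ ?_
      exact ((sortedRotations_perm T).map _).trans (map_rot1_perm d T)
    rw [sorted_take_eq T (k + 1)]
    congr 1
    rw [← Multiset.coe_eq_coe] at hperm
    exact hperm.symm

/-- The BWT (together with the length) determines the sorted rotation matrix. -/
lemma sortedRotations_eq_recon (T : List α) (d : α) :
    sortedRotations T = recon T.length (bwt T) T.length := by
  rw [← recon_spec T d T.length le_rfl]
  symm
  refine (List.map_congr_left fun R hR => ?_).trans (List.map_id _)
  exact List.take_of_length_le (le_of_eq (length_of_mem_rotations
    ((sortedRotations_perm T).mem_iff.mp hR)))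

end Aux

/-- the Burrows-Wheeler transform is injective on terminated strings.
Let `#` (here `sharp`) be the minimum of the alphabet, and let `T₁`, `T₂` be strings of
the same length `n`, each containing exactly one occurrence of `#` and each ending
with `#`. If `BWT(T₁) = BWT(T₂)` then `T₁ = T₂`. -/
theorem bwt_injective_on_terminated {α : Type*} [LinearOrder α]
    (sharp : α) (hsharp : ∀ x : α, sharp ≤ x)
    (T₁ T₂ : List α) (hlen : T₁.length = T₂.length)
    (h₁count : T₁.count sharp = 1) (h₂count : T₂.count sharp = 1)
    (h₁last : T₁.getLast? = some sharp) (h₂last : T₂.getLast? = some sharp)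
    (hbwt : bwt T₁ = bwt T₂) :
    T₁ = T₂ := by
  have h₁ne : T₁ ≠ [] := by intro h; rw [h] at h₁last; simp at h₁last
  have h₂ne : T₂ ≠ [] := by intro h; rw [h] at h₂last; simp at h₂last
  -- The sorted rotation matrices coincide.
  have hS : sortedRotations T₁ = sortedRotations T₂ := by
    rw [sortedRotations_eq_recon T₁ sharp, sortedRotations_eq_recon T₂ sharp, hlen, hbwt]
  -- Hence the rotations are a permutation of each other.
  have hrot : (rotations T₁).Perm (rotations T₂) :=
    ((sortedRotations_perm T₁).symm.trans (hS ▸ sortedRotations_perm T₂))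
  -- T₁ is one of its own rotations.
  have hT₁mem : T₁ ∈ rotations T₁ := by
    unfold rotations
    refine List.mem_map.mpr ⟨0, ?_, by simp⟩
    rw [List.mem_range]
    exact List.length_pos_iff.mpr h₁ne
  have hT₁mem₂ : T₁ ∈ rotations T₂ := hrot.mem_iff.mp hT₁mem
  unfold rotations at hT₁mem₂
  obtain ⟨i, hi, hEq⟩ := List.mem_map.mp hT₁mem₂
  rw [List.mem_range] at hi
  rcases Nat.eq_zero_or_pos i with rfl | hipos
  · simp at hEq
    exact hEq.symm
  · exfalso
    -- The rotation by i > 0 ends with T₂[i-1], which lies in dropLast T₂,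
    -- but sharp does not occur in dropLast T₂.
    have htake_ne : T₂.take i ≠ [] := by
      rw [Ne, List.take_eq_nil_iff]
      push_neg
      exact ⟨by omega, h₂ne⟩
    have hlast' : (T₂.take i).getLast? = some sharp := by
      rw [← h₁last, ← hEq, List.getLast?_append,
        List.getLast?_eq_getLast htake_ne]
      rfl
    have hsharpmem : sharp ∈ T₂.take i := by
      rw [List.getLast?_eq_getLast htake_ne] at hlast'
      exact Option.some_inj.mp hlast' ▸ List.getLast_mem htake_ne
    -- sharp ∈ dropLast T₂
    have hsub : T₂.take i ⊆ T₂.dropLast := by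
      rw [List.dropLast_eq_take]
      intro x hx
      have : T₂.take i = (T₂.take (T₂.length - 1)).take i := by
        rw [List.take_take]
        congr 1
        omega
      rw [this] at hx
      exact List.take_subset _ _ hx
    have hsharpdl : sharp ∈ T₂.dropLast := hsub hsharpmem
    -- but count sharp in dropLast T₂ is 0
    have hT₂eq : T₂.dropLast ++ [sharp] = T₂ := by
      have h := List.dropLast_append_getLast h₂ne
      rwa [show T₂.getLast h₂ne = sharp from by
        have := List.getLast?_eq_getLast h₂ne
        rw [h₂last] at this
        exact (Option.some_inj.mp this).symm] at h
    have hcount : T₂.dropLast.count sharp = 0 := by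
      have : (T₂.dropLast ++ [sharp]).count sharp = 1 := by rw [hT₂eq]; exact h₂count
      rw [List.count_append] at this
      simp at this
      exact this
    exact absurd hsharpdl (List.count_eq_zero.mp hcount)
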